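/- Let G be a group with subgroups H and K of finite indices n = [G:H] and m = [G:K]. Then the number of (H,K)-double cosets in G is at most gcd(n, m). -/

import Mathlib

open MulAction

private lemma aux_dvd3 {n m a b : ℕ} (hn : n ≠ 0) (hm : m ≠ 0) (h : a * n = b * m) :
    m / Nat.gcd n m ∣ a := by
  set d := Nat.gcd n m with hd_def
  have hd : 0 < d := Nat.gcd_pos_of_pos_left m (Nat.pos_of_ne_zero hn)
  have hdn : d ∣ n := Nat.gcd_dvd_left n m
  have hdm : d ∣ m := Nat.gcd_dvd_right n m
  have hco : Nat.Coprime (n / d) (m / d) := Nat.coprime_div_gcd_div_gcd hd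
  have key : a * (n / d) = b * (m / d) := by
    apply Nat.eq_of_mul_eq_mul_right hd
    calc a * (n / d) * d = a * n := by rw [mul_assoc, Nat.div_mul_cancel hdn]
      _ = b * m := h
      _ = b * (m / d) * d := by rw [mul_assoc, Nat.div_mul_cancel hdm]
  have hdvd : (m / d) ∣ a * (n / d) := ⟨b, by rw [key, mul_comm]⟩
  exact (Nat.Coprime.dvd_of_dvd_mul_right hco.symm hdvd)

theorem stmt_3 {G : Type*} [Group G] (H K : Subgroup G) [H.FiniteIndex] [K.FiniteIndex] :
    Nat.card (DoubleCoset.Quotient (H : Set G) (K : Set G)) ≤ Nat.gcd H.index K.index := by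
  classical
  set n := H.index with hn_def
  set m := K.index with hm_def
  set d := Nat.gcd n m with hd_def
  have hn : n ≠ 0 := Subgroup.FiniteIndex.index_ne_zero
  have hm : m ≠ 0 := Subgroup.FiniteIndex.index_ne_zero
  -- the natural map from `G ⧸ K` to the double coset quotient
  let f : G ⧸ K → DoubleCoset.Quotient (H : Set G) (K : Set G) :=
    Quotient.map' id (fun a b hab => by
      rw [QuotientGroup.leftRel_apply] at hab
      rw [DoubleCoset.rel_iff]
      exact ⟨1, H.one_mem, a⁻¹ * b, hab, by simp⟩)
  have hf_mk : ∀ x : G, f (x : G ⧸ K) = DoubleCoset.mk H K x := fun x => rfl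
  have hf_surj : Function.Surjective f := by
    intro q
    exact ⟨((q.out : G) : G ⧸ K), by rw [hf_mk, DoubleCoset.out_eq']⟩
  haveI : Finite (G ⧸ K) := Subgroup.finite_quotient_of_finiteIndex (H := K)
  haveI : Finite (DoubleCoset.Quotient (H : Set G) (K : Set G)) := Finite.of_surjective f hf_surj
  -- each fiber of `f` is an orbit of `H` acting on `G ⧸ K`
  have fiber_card : ∀ q : DoubleCoset.Quotient (H : Set G) (K : Set G),
      m / d ∣ Nat.card {x : G ⧸ K // f x = q} ∧ Nat.card {x : G ⧸ K // f x = q} ≠ 0 := by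
    intro q
    set g : G := q.out with hg_def
    -- fiber equals the H-orbit of ↑g
    have horbit : {x : G ⧸ K | f x = q} = MulAction.orbit H ((g : G ⧸ K)) := by
      ext x
      induction x using QuotientGroup.induction_on with
      | H x =>
        simp only [Set.mem_setOf_eq, hf_mk, MulAction.mem_orbit_iff]
        constructor
        · intro hx
          rw [← DoubleCoset.out_eq' (H : Subgroup G) K q, ← hg_def] at hx
          obtain ⟨h, hh, k, hk, hxk⟩ := (DoubleCoset.eq H K x g).mp hx
          refine ⟨⟨h⁻¹, H.inv_mem hh⟩, ?_⟩
          show ((h⁻¹ * g : G) : G ⧸ K) = (x : G ⧸ K)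
          rw [QuotientGroup.eq]
          have hk' : (h⁻¹ * g)⁻¹ * x = k⁻¹ := by rw [hxk]; group
          rw [hk']
          exact K.inv_mem hk
        · rintro ⟨⟨h, hh⟩, hx⟩
          have hx' : ((h * g : G) : G ⧸ K) = (x : G ⧸ K) := hx
          rw [QuotientGroup.eq] at hx'
          have hmk : DoubleCoset.mk H K g = DoubleCoset.mk H K x := by
            rw [DoubleCoset.eq]
            exact ⟨h, hh, (h * g)⁻¹ * x, hx', by group⟩
          rw [← hmk, hg_def, DoubleCoset.out_eq']
  -- compute the cardinality of the orbit via the stabilizer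
    have hcard : Nat.card {x : G ⧸ K // f x = q} =
        (MulAction.stabilizer H ((g : G ⧸ K))).index := by
      rw [Subgroup.index]
      apply Nat.card_congr
      exact (Equiv.setCongr horbit).trans (MulAction.orbitEquivQuotientStabilizer H _)
    -- identify the stabilizer
    set S : Subgroup G := MulAction.stabilizer G ((g : G ⧸ K)) with hS_def
    have hstab : MulAction.stabilizer H ((g : G ⧸ K)) = S.subgroupOf H := by
      ext ⟨h, hh⟩
      simp only [MulAction.mem_stabilizer_iff, Subgroup.mem_subgroupOf, hS_def]
      rfl
    have hSindex : S.index = m := by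
      have h1 : ((g : G ⧸ K)) = g • ((1 : G) : G ⧸ K) := by
        rw [show g • ((1 : G) : G ⧸ K) = ((g * 1 : G) : G ⧸ K) from rfl, mul_one]
      rw [hS_def, h1, MulAction.stabilizer_smul_eq_stabilizer_map_conj,
        MulAction.stabilizer_quotient]
      rw [show (MulAut.conj g).toMonoidHom = ((MulAut.conj g : G ≃* G) : G →* G) from rfl]
      rw [Subgroup.map_equiv_eq_comap_symm]
      exact Subgroup.index_comap_of_surjective K (MulEquiv.surjective _)
    -- the fiber cardinality a satisfies a * n = b * m
    have hrel : S.relIndex H * n = (S ⊓ H).relIndex S * m := by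
      have e1 : (S ⊓ H).relIndex H * H.index = (S ⊓ H).index :=
        Subgroup.relIndex_mul_index inf_le_right
      have e2 : (S ⊓ H).relIndex S * S.index = (S ⊓ H).index :=
        Subgroup.relIndex_mul_index inf_le_left
      rw [Subgroup.inf_relIndex_right] at e1
      rw [← hn_def] at e1
      rw [hSindex] at e2
      rw [e1, e2]
    have hcard' : Nat.card {x : G ⧸ K // f x = q} = S.relIndex H := by
      rw [hcard, hstab]; rfl
    constructor
    · rw [hcard']
      exact aux_dvd3 hn hm hrel
    · rw [hcard']
      have : Nat.card {x : G ⧸ K // f x = q} ≠ 0 := by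
        have : Nonempty {x : G ⧸ K // f x = q} := by
          refine ⟨⟨((g : G) : G ⧸ K), ?_⟩⟩
          rw [hf_mk, hg_def, DoubleCoset.out_eq']
        exact Nat.card_ne_zero.mpr ⟨this, inferInstance⟩
      rwa [hcard'] at this
  -- sum fibers
  haveI : Fintype (G ⧸ K) := Fintype.ofFinite _
  haveI : Fintype (DoubleCoset.Quotient (H : Set G) (K : Set G)) := Fintype.ofFinite _
  have hsum : ∑ q : DoubleCoset.Quotient (H : Set G) (K : Set G),
      Nat.card {x : G ⧸ K // f x = q} = m := by
    have := Fintype.card_congr (Equiv.sigmaFiberEquiv f)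
    rw [Fintype.card_sigma] at this
    rw [hm_def, Subgroup.index, Nat.card_eq_fintype_card, ← this]
    exact Finset.sum_congr rfl fun q _ => Nat.card_eq_fintype_card
  have hmd_pos : 0 < m / d := Nat.div_pos (Nat.le_of_dvd (Nat.pos_of_ne_zero hm)
    (Nat.gcd_dvd_right n m)) (Nat.gcd_pos_of_pos_left m (Nat.pos_of_ne_zero hn))
  have hlow : Nat.card (DoubleCoset.Quotient (H : Set G) (K : Set G)) * (m / d) ≤ m := by
    have hle : Nat.card (DoubleCoset.Quotient (H : Set G) (K : Set G)) * (m / d) ≤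
        ∑ q : DoubleCoset.Quotient (H : Set G) (K : Set G), Nat.card {x : G ⧸ K // f x = q} := by
      have e1 : Nat.card (DoubleCoset.Quotient (H : Set G) (K : Set G)) * (m / d)
          = ∑ _q : DoubleCoset.Quotient (H : Set G) (K : Set G), (m / d) := by
        rw [Finset.sum_const, Finset.card_univ, smul_eq_mul, Nat.card_eq_fintype_card]
      rw [e1]
      exact Finset.sum_le_sum fun q _ =>
        Nat.le_of_dvd (Nat.pos_of_ne_zero (fiber_card q).2) (fiber_card q).1
    rwa [hsum] at hle
  have hfin : Nat.card (DoubleCoset.Quotient (H : Set G) (K : Set G)) * (m / d) ≤ d * (m / d) := by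
    rwa [Nat.mul_div_cancel' (Nat.gcd_dvd_right n m)]
  exact Nat.le_of_mul_le_mul_right hfin hmd_pos
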